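/- Let Γ be a finitely generated nilpotent group whose abelianization is isomorphic to ℤ^r × A with A a finite abelian group, and let K be a closed subgroup of the unitary group U(n). Then the connected component of the trivial homomorphism in the representation space Hom(Γ,K) is homeomorphic to the connected component of the trivial homomorphism in the representation space Hom(ℤ^r, K). -/

import Mathlib

/-- The representation space `Hom(Γ,G)`: group homomorphisms with the topology of pointwise
convergence, i.e. the topology induced from the product space `Γ → G`. -/
instance repSpaceTopology {Γ G : Type*} [Group Γ] [Group G] [TopologicalSpace G] :
    TopologicalSpace (Γ →* G) :=
  TopologicalSpace.induced (fun ρ => (ρ : Γ → G)) Pi.topologicalSpace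

open Complex Polynomial
open Subgroup
open scoped commutatorElement

notation:max "lowerCentralSeries " G:max => Subgroup.lowerCentralSeries (⊤ : Subgroup G)

noncomputable def Complex.abs : AbsoluteValue ℂ ℝ := NormedField.toAbsoluteValue ℂ

@[simp] lemma Complex.abs_apply_norm (z : ℂ) : Complex.abs z = ‖z‖ := rfl

section AuxAnalysis




lemma aux_root_near_one (e : ℕ) (he : 1 ≤ e) (lam : ℂ) (h1 : lam ^ e = 1)
    (h2 : Complex.abs (lam - 1) ≤ 2 / (e + 1)) : lam = 1 := by
  by_contra hne
  have habs : Complex.abs lam = 1 := by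
    have h : Complex.abs lam ^ e = 1 := by rw [← map_pow, h1, map_one]
    have h0 := Complex.abs.nonneg lam
    rcases lt_trichotomy (Complex.abs lam) 1 with h' | h' | h'
    · have := pow_lt_one₀ h0 h' (by omega : e ≠ 0); rw [h] at this; linarith
    · exact h'
    · have := one_lt_pow₀ h' (by omega : e ≠ 0); rw [h] at this; linarith
  have hgeom : ∑ k ∈ Finset.range e, lam ^ k = 0 := by
    have := geom_sum_eq hne e
    rw [this, h1, sub_self, zero_div]
  have hk : ∀ k : ℕ, Complex.abs (1 - lam ^ k) ≤ k * Complex.abs (lam - 1) := by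
    intro k
    induction k with
    | zero => simp
    | succ k ih =>
      have h' : 1 - lam ^ (k+1) = (1 - lam ^ k) + lam ^ k * (1 - lam) := by ring
      rw [h']
      calc Complex.abs _ ≤ Complex.abs (1 - lam ^ k) + Complex.abs (lam ^ k * (1 - lam)) :=
            Complex.abs.add_le _ _
        _ ≤ k * Complex.abs (lam - 1) + Complex.abs (lam ^ k) * Complex.abs (1 - lam) := by
            rw [map_mul]; exact add_le_add ih le_rfl
        _ = (k + 1 : ℕ) * Complex.abs (lam - 1) := by
            rw [map_pow, habs, one_pow, ← Complex.abs.map_neg (1 - lam), neg_sub]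
            push_cast; ring
  set D := Complex.abs (lam - 1) with hD
  have hD0 : 0 ≤ D := Complex.abs.nonneg _
  have hsum : (e : ℝ) ≤ (e * (e - 1) / 2) * D := by
    have heq : (e : ℂ) = ∑ k ∈ Finset.range e, (1 - lam ^ k) := by
      rw [Finset.sum_sub_distrib, hgeom, sub_zero, Finset.sum_const, Finset.card_range]
      simp
    have hsumk : (∑ k ∈ Finset.range e, (k : ℝ)) = e * (e - 1) / 2 := by
      have := Finset.sum_range_id_mul_two e
      have h2' : ((∑ i ∈ Finset.range e, i : ℕ) : ℝ) * 2 = (e : ℝ) * ((e : ℝ) - 1) := by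
        have h3' : (((∑ i ∈ Finset.range e, i) * 2 : ℕ) : ℝ) = ((e * (e-1) : ℕ) : ℝ) := by
          rw [this]
        push_cast at h3'
        rcases Nat.exists_eq_add_of_le he with ⟨m, rfl⟩
        have hm : 1 + m - 1 = m := by omega
        rw [hm] at h3'
        push_cast at h3' ⊢
        linarith
      push_cast at h2' ⊢
      linarith
    calc (e : ℝ) = Complex.abs (e : ℂ) := by simp
      _ ≤ ∑ k ∈ Finset.range e, Complex.abs (1 - lam ^ k) := by
          rw [heq]; exact Complex.abs.sum_le _ _
      _ ≤ ∑ k ∈ Finset.range e, (k : ℝ) * D := Finset.sum_le_sum fun k _ => hk k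
      _ = (∑ k ∈ Finset.range e, (k : ℝ)) * D := by rw [Finset.sum_mul]
      _ = (e * (e - 1) / 2) * D := by rw [hsumk]
  have he' : (1 : ℝ) ≤ (e : ℝ) := by exact_mod_cast he
  have hpos : (0:ℝ) < (e : ℝ) + 1 := by linarith
  have hD2 : D * ((e : ℝ) + 1) ≤ 2 := by
    rw [← le_div_iff₀ hpos]; exact h2
  nlinarith [mul_le_mul_of_nonneg_right hsum (le_of_lt hpos),
    mul_le_mul_of_nonneg_left hD2 (by nlinarith : (0:ℝ) ≤ (e:ℝ) * ((e:ℝ) - 1) / 2)]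



lemma aux_unitary_trace_eq (n : ℕ) (z : Matrix (Fin n) (Fin n) ℂ)
    (hz : z ∈ Matrix.unitaryGroup (Fin n) ℂ) (htr : z.trace = n) : z = 1 := by
  have hz' : star z * z = 1 := (Matrix.mem_unitaryGroup_iff').mp hz
  have hcol : ∀ j, ∑ i, Complex.normSq (z i j) = 1 := by
    intro j
    have h := congrFun (congrFun (congrArg (fun M => (M : Matrix (Fin n) (Fin n) ℂ)) hz') j) j
    simp only [Matrix.mul_apply, Matrix.one_apply_eq] at h
    have h2 : ∑ i, ((Complex.normSq (z i j) : ℂ)) = 1 := by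
      rw [← h]
      apply Finset.sum_congr rfl
      intro i _
      rw [Matrix.star_apply, RCLike.star_def, Complex.normSq_eq_conj_mul_self]
    have h3 : ((∑ i, Complex.normSq (z i j) : ℝ) : ℂ) = ((1 : ℝ) : ℂ) := by
      push_cast
      rw [h2]
    exact_mod_cast h3
  have hnsq_le : ∀ i j, Complex.normSq (z i j) ≤ 1 := by
    intro i j
    rw [← hcol j]
    exact Finset.single_le_sum (f := fun k => Complex.normSq (z k j))
      (fun k _ => Complex.normSq_nonneg _) (Finset.mem_univ i)
  have hre_le : ∀ i, (z i i).re ≤ 1 := by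
    intro i
    have h1 : (z i i).re ≤ Complex.abs (z i i) := Complex.re_le_norm _
    have h2 : Complex.abs (z i i) ^ 2 = Complex.normSq (z i i) := Complex.sq_norm _
    nlinarith [Complex.abs.nonneg (z i i), hnsq_le i i]
  have hre_sum : ∑ i, (z i i).re = n := by
    have : (z.trace).re = (n : ℂ).re := by rw [htr]
    simpa [Matrix.trace, Complex.re_sum] using this
  have hone : ∀ i, (z i i).re = 1 := by
    have hzero : ∑ i, (1 - (z i i).re) = 0 := by
      rw [Finset.sum_sub_distrib]
      simp [hre_sum]
    intro i
    have := (Finset.sum_eq_zero_iff_of_nonneg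
      (fun j _ => by linarith [hre_le j] : ∀ j ∈ Finset.univ, 0 ≤ 1 - (z j j).re)).mp hzero
      i (Finset.mem_univ i)
    linarith
  have hdiag : ∀ i, z i i = 1 := by
    intro i
    have him : (z i i).im = 0 := by
      have h := hnsq_le i i
      rw [Complex.normSq_apply, hone i] at h
      nlinarith [sq_nonneg (z i i).im]
    have := hone i
    apply Complex.ext <;> simp [this, him]
  have hoff : ∀ i j, i ≠ j → z i j = 0 := by
    intro i j hij
    have hsplit : Complex.normSq (z j j) + ∑ i ∈ Finset.univ.erase j, Complex.normSq (z i j) = 1 := by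
      have h := Finset.add_sum_erase Finset.univ (fun k => Complex.normSq (z k j))
        (Finset.mem_univ j)
      rw [hcol j] at h
      exact h
    rw [hdiag j] at hsplit
    simp only [Complex.normSq_one] at hsplit
    have hz0 : ∑ i ∈ Finset.univ.erase j, Complex.normSq (z i j) = 0 := by linarith
    have := (Finset.sum_eq_zero_iff_of_nonneg
      (fun k _ => Complex.normSq_nonneg _)).mp hz0 i (Finset.mem_erase.mpr ⟨hij, Finset.mem_univ i⟩)
    exact Complex.normSq_eq_zero.mp this
  ext i j
  by_cases h : i = j
  · subst h; rw [hdiag i, Matrix.one_apply_eq]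
  · rw [hoff i j h, Matrix.one_apply_ne h]



lemma aux_unitary_eq_one (n e : ℕ) (he : 1 ≤ e) (z : Matrix (Fin n) (Fin n) ℂ)
    (hz : z ∈ Matrix.unitaryGroup (Fin n) ℂ)
    (heig : ∀ (lam : ℂ) (v : Fin n → ℂ), v ≠ 0 → z.mulVec v = lam • v → lam ^ e = 1)
    (hnear : ∀ i j, Complex.abs (z i j - (1 : Matrix (Fin n) (Fin n) ℂ) i j)
      < 2 / (n * (e + 1))) :
    z = 1 := by
  rcases Nat.eq_zero_or_pos n with h0 | hn
  · subst h0; exact Subsingleton.elim z 1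
  -- every root of the characteristic polynomial has an eigenvector
  have hroot : ∀ lam ∈ z.charpoly.roots, ∃ v : Fin n → ℂ, v ≠ 0 ∧ z.mulVec v = lam • v := by
    intro lam hlam
    have hr : z.charpoly.IsRoot lam := (Polynomial.mem_roots'.mp hlam).2
    have hmap : (z.charmatrix).map (Polynomial.eval lam)
        = Matrix.diagonal (fun _ => lam) - z := by
      ext i j
      by_cases h : i = j
      · subst h
        simp [Matrix.charmatrix_apply_eq, Matrix.diagonal_apply_eq, Matrix.map_apply,
          Matrix.sub_apply]
      · simp [Matrix.charmatrix_apply_ne _ _ _ h, Matrix.diagonal_apply_ne _ h, Matrix.map_apply,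
          Matrix.sub_apply]
    have hdet : (Matrix.diagonal (fun _ : Fin n => lam) - z).det = 0 := by
      have h1 : Polynomial.eval lam z.charpoly = 0 := hr
      have h2 : (Polynomial.evalRingHom lam) (z.charmatrix.det) = 0 := by
        rw [Matrix.charpoly] at h1
        exact h1
      rw [RingHom.map_det] at h2
      rw [← hmap]
      convert h2 using 2
      rfl
    obtain ⟨v, hv0, hveq⟩ := (Matrix.exists_mulVec_eq_zero_iff).mpr hdet
    refine ⟨v, hv0, ?_⟩
    have h3 : (Matrix.diagonal (fun _ : Fin n => lam)).mulVec v - z.mulVec v = 0 := by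
      rw [← Matrix.sub_mulVec]; exact hveq
    have h4 : (Matrix.diagonal (fun _ : Fin n => lam)).mulVec v = lam • v := by
      funext i
      simp [Matrix.mulVec_diagonal]
    rw [h4] at h3
    funext i
    have := congrFun h3 i
    simp only [Pi.sub_apply, Pi.zero_apply, sub_eq_zero] at this
    rw [this]
  have hall : ∀ lam ∈ z.charpoly.roots, lam = 1 := by
    intro lam hlam
    obtain ⟨v, hv0, hveq⟩ := hroot lam hlam
    have h1 : lam ^ e = 1 := heig lam v hv0 hveq
    obtain ⟨i, hi⟩ : ∃ i, ∀ j, Complex.abs (v j) ≤ Complex.abs (v i) := by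
      have hne : (Finset.univ : Finset (Fin n)).Nonempty := ⟨⟨0, hn⟩, Finset.mem_univ _⟩
      obtain ⟨i, -, hi⟩ := Finset.exists_max_image Finset.univ (fun j => Complex.abs (v j)) hne
      exact ⟨i, fun j => hi j (Finset.mem_univ j)⟩
    have hvi : 0 < Complex.abs (v i) := by
      rcases (Complex.abs.nonneg (v i)).lt_or_eq with h | h
      · exact h
      · exfalso; apply hv0; funext j
        have h2 := hi j
        rw [← h] at h2
        exact Complex.abs.eq_zero.mp (le_antisymm h2 (Complex.abs.nonneg _))
    have key : (lam - 1) * v i = ∑ j, (z i j - (1 : Matrix (Fin n) (Fin n) ℂ) i j) * v j := by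
      have h1v : ∑ j, (1 : Matrix (Fin n) (Fin n) ℂ) i j * v j = v i := by
        simp [Matrix.one_apply]
      have h2v : ∑ j, z i j * v j = lam * v i := by
        have := congrFun hveq i
        simpa [Matrix.mulVec, dotProduct] using this
      calc (lam - 1) * v i = lam * v i - v i := by ring
        _ = (∑ j, z i j * v j) - (∑ j, (1 : Matrix (Fin n) (Fin n) ℂ) i j * v j) := by
            rw [h2v, h1v]
        _ = ∑ j, (z i j * v j - (1 : Matrix (Fin n) (Fin n) ℂ) i j * v j) :=
            (Finset.sum_sub_distrib _ _).symm
        _ = ∑ j, (z i j - (1 : Matrix (Fin n) (Fin n) ℂ) i j) * v j := by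
            apply Finset.sum_congr rfl; intros; ring
    have hdelta : (0:ℝ) ≤ 2 / (n * (e+1)) := by positivity
    have habs : Complex.abs (lam - 1) ≤ 2 / (e + 1) := by
      have hb : Complex.abs (lam - 1) * Complex.abs (v i)
          ≤ (n : ℝ) * (2 / (n * (e+1))) * Complex.abs (v i) := by
        rw [← map_mul, key]
        calc Complex.abs (∑ j, (z i j - (1 : Matrix (Fin n) (Fin n) ℂ) i j) * v j)
            ≤ ∑ j, Complex.abs ((z i j - (1 : Matrix (Fin n) (Fin n) ℂ) i j) * v j) :=
              Complex.abs.sum_le _ _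
          _ ≤ ∑ _j : Fin n, (2 / (n * (e+1))) * Complex.abs (v i) := by
              refine Finset.sum_le_sum fun j _ => ?_
              rw [map_mul]
              exact mul_le_mul (le_of_lt (hnear i j)) (hi j) (Complex.abs.nonneg _) hdelta
          _ = (n : ℝ) * (2 / (n * (e+1))) * Complex.abs (v i) := by
              rw [Finset.sum_const, Finset.card_univ, Fintype.card_fin, nsmul_eq_mul]
              ring
      have hn0 : (n : ℝ) ≠ 0 := by positivity
      have hsimp : (n:ℝ) * (2 / (n*((e:ℝ)+1))) = 2 / ((e:ℝ)+1) := by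
        field_simp
      rw [hsimp] at hb
      exact le_of_mul_le_mul_right hb hvi
    exact aux_root_near_one e he lam h1 habs
  have hcard : z.charpoly.roots.card = n := by
    have hsp : z.charpoly.Splits := IsAlgClosed.splits _
    have h1 := (Polynomial.splits_iff_card_roots).mp hsp
    rw [h1, Matrix.charpoly_natDegree_eq_dim, Fintype.card_fin]
  have hrep : z.charpoly.roots = Multiset.replicate n 1 :=
    Multiset.eq_replicate.mpr ⟨hcard, fun b hb => hall b hb⟩
  have htr : z.trace = n := by
    rw [Matrix.trace_eq_sum_roots_charpoly, hrep, Multiset.sum_replicate]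
    simp
  exact aux_unitary_trace_eq n z hz htr

end AuxAnalysis

section AuxGroup



lemma aux_eig_pow {n : ℕ} {Γ : Type*} [Group Γ] (ρ : Γ →* Matrix.unitaryGroup (Fin n) ℂ)
    (w : Γ) (hw : w ∈ commutator Γ)
    (hcomm : ∀ g : Γ, ((ρ w : Matrix (Fin n) (Fin n) ℂ)) * (ρ g : Matrix (Fin n) (Fin n) ℂ)
       = (ρ g : Matrix (Fin n) (Fin n) ℂ) * (ρ w : Matrix (Fin n) (Fin n) ℂ))
    (lam : ℂ) (v : Fin n → ℂ) (hv : v ≠ 0)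
    (heq : (ρ w : Matrix (Fin n) (Fin n) ℂ).mulVec v = lam • v) :
    lam ^ (Nat.factorial n) = 1 := by
  classical
  set f : Module.End ℂ (Fin n → ℂ) := Matrix.toLin' ((ρ w : Matrix (Fin n) (Fin n) ℂ)) with hf
  set W : Submodule ℂ (Fin n → ℂ) := Module.End.eigenspace f lam with hWdef
  have hvW : v ∈ W := by
    rw [hWdef, Module.End.mem_eigenspace_iff, hf, Matrix.toLin'_apply]
    exact heq
  have hmaps : ∀ g : Γ, ∀ x ∈ W, Matrix.toLin' ((ρ g : Matrix (Fin n) (Fin n) ℂ)) x ∈ W := by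
    intro g x hx
    rw [hWdef, Module.End.mem_eigenspace_iff] at hx ⊢
    have h1 : f (Matrix.toLin' ((ρ g : Matrix (Fin n) (Fin n) ℂ)) x)
        = Matrix.toLin' ((ρ g : Matrix (Fin n) (Fin n) ℂ)) (f x) := by
      rw [hf, ← Matrix.toLin'_mul_apply, ← Matrix.toLin'_mul_apply, hcomm g]
    rw [h1, hx, map_smul]
  -- the determinant of the restriction, as a homomorphism
  have hre : ∀ g₁ g₂ : Γ,
      (Matrix.toLin' ((ρ (g₁ * g₂) : Matrix (Fin n) (Fin n) ℂ))).restrict (hmaps (g₁ * g₂))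
      = ((Matrix.toLin' ((ρ g₁ : Matrix (Fin n) (Fin n) ℂ))).restrict (hmaps g₁)) ∘ₗ
        ((Matrix.toLin' ((ρ g₂ : Matrix (Fin n) (Fin n) ℂ))).restrict (hmaps g₂)) := by
    intro g₁ g₂
    apply LinearMap.ext
    rintro ⟨x, hx⟩
    apply Subtype.ext
    simp only [LinearMap.restrict_apply, LinearMap.comp_apply]
    rw [map_mul]
    push_cast
    rw [← Matrix.toLin'_mul_apply]
  let ψ : Γ →* ℂ :=
  { toFun := fun g =>
      LinearMap.det ((Matrix.toLin' ((ρ g : Matrix (Fin n) (Fin n) ℂ))).restrict (hmaps g))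
    map_one' := by
      have h1 : (Matrix.toLin' ((ρ 1 : Matrix (Fin n) (Fin n) ℂ))).restrict (hmaps 1)
          = LinearMap.id := by
        apply LinearMap.ext
        rintro ⟨x, hx⟩
        apply Subtype.ext
        simp only [LinearMap.restrict_apply, map_one, LinearMap.id_apply]
        rw [show ((1 : Matrix.unitaryGroup (Fin n) ℂ) : Matrix (Fin n) (Fin n) ℂ) = 1 from rfl,
          Matrix.toLin'_one, LinearMap.id_apply]
      rw [h1, LinearMap.det_id]
    map_mul' := fun g₁ g₂ => by
      rw [hre g₁ g₂, LinearMap.det_comp] }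
  have hψw : ψ w = 1 := by
    have h1 : w ∈ (ψ.toHomUnits).ker := Abelianization.commutator_subset_ker ψ.toHomUnits hw
    have h2 : ψ.toHomUnits w = 1 := h1
    have h3 := congrArg (Units.val) h2
    rw [MonoidHom.coe_toHomUnits] at h3
    exact h3
  have hres : (Matrix.toLin' ((ρ w : Matrix (Fin n) (Fin n) ℂ))).restrict (hmaps w)
      = lam • LinearMap.id := by
    apply LinearMap.ext
    rintro ⟨x, hx⟩
    apply Subtype.ext
    simp only [LinearMap.restrict_apply, LinearMap.smul_apply, LinearMap.id_apply]
    have := Module.End.mem_eigenspace_iff.mp hx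
    rw [← hf, this]
    rfl
  have hdet : ψ w = lam ^ (Module.finrank ℂ W) := by
    show LinearMap.det _ = _
    rw [hres, LinearMap.det_smul, LinearMap.det_id, mul_one]
  have hd : lam ^ (Module.finrank ℂ W) = 1 := by rw [← hdet, hψw]
  have hd1 : 0 < Module.finrank ℂ W := by
    rw [Module.finrank_pos_iff]
    refine ⟨⟨⟨v, hvW⟩, 0, ?_⟩⟩
    intro h
    apply hv
    simpa using congrArg Subtype.val h
  have hd2 : Module.finrank ℂ W ≤ n := by
    have := Submodule.finrank_le W
    rwa [Module.finrank_fin_fun] at this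
  have hdvd : Module.finrank ℂ W ∣ Nat.factorial n := Nat.dvd_factorial hd1 hd2
  obtain ⟨k, hk⟩ := hdvd
  rw [hk, pow_mul, hd, one_pow]



variable {Γ : Type*} [Group Γ]

/-- Iterated commutator generating sets. -/
def auxF (S : Set Γ) : ℕ → Set Γ
  | 0 => S
  | (i+1) => (fun p : Γ × Γ => ⁅p.1, p.2⁆) '' ((auxF S i) ×ˢ S)

lemma auxF_finite {S : Set Γ} (hS : S.Finite) : ∀ i, (auxF S i).Finite
  | 0 => hS
  | (i+1) => Set.Finite.image _ (Set.Finite.prod (auxF_finite hS i) hS)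

lemma auxF_subset (S : Set Γ) : ∀ i, auxF S i ⊆ (lowerCentralSeries Γ i : Set Γ)
  | 0 => fun x _ => mem_top x
  | (i+1) => by
    rintro x ⟨⟨t, s⟩, ⟨ht, hs⟩, rfl⟩
    have h1 : t ∈ lowerCentralSeries Γ i := auxF_subset S i ht
    show ⁅t, s⁆ ∈ lowerCentralSeries Γ (i+1)
    show ⁅t, s⁆ ∈ ⁅lowerCentralSeries Γ i, (⊤ : Subgroup Γ)⁆
    exact Subgroup.commutator_mem_commutator h1 (mem_top s)

lemma auxP (S : Set Γ) (hS : Subgroup.closure S = ⊤) :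
    ∀ i, lowerCentralSeries Γ i ≤
      Subgroup.normalClosure (auxF S i) ⊔ lowerCentralSeries Γ (i+1)
  | 0 => by
    calc lowerCentralSeries Γ 0 = ⊤ := rfl
      _ = Subgroup.closure S := hS.symm
      _ ≤ Subgroup.normalClosure (auxF S 0) := Subgroup.closure_le_normalClosure
      _ ≤ _ := le_sup_left
  | (i+1) => by
    set R : Subgroup Γ :=
      Subgroup.normalClosure (auxF S (i+1)) ⊔ lowerCentralSeries Γ (i+2) with hR
    have hRnormal : R.Normal := Subgroup.sup_normal _ _
    let q : Γ →* Γ ⧸ R := QuotientGroup.mk' R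
    have hqsurj : Function.Surjective q := QuotientGroup.mk'_surjective R
    have hker : ∀ x : Γ, q x = 1 ↔ x ∈ R := fun x => QuotientGroup.eq_one_iff x
    -- images of elements of `auxF S i` are central in the quotient
    have hcentf : ∀ f ∈ auxF S i, q f ∈ Subgroup.center (Γ ⧸ R) := by
      intro f hf
      have htop : (⊤ : Subgroup (Γ ⧸ R)) = Subgroup.closure (q '' S) := by
        rw [← MonoidHom.map_closure, hS, Subgroup.map_top_of_surjective q hqsurj]
      have hcent : (⊤ : Subgroup (Γ ⧸ R)) ≤ Subgroup.centralizer {q f} := by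
        rw [htop]
        apply Subgroup.closure_le _ |>.mpr
        rintro _ ⟨s, hs, rfl⟩
        rw [SetLike.mem_coe, Subgroup.mem_centralizer_iff]
        rintro h hh
        rw [Set.mem_singleton_iff] at hh
        subst hh
        have hfs : ⁅f, s⁆ ∈ auxF S (i+1) := ⟨(f, s), ⟨hf, hs⟩, rfl⟩
        have hmem : ⁅f, s⁆ ∈ R := Subgroup.mem_sup_left (Subgroup.subset_normalClosure hfs)
        have h1 : ⁅q f, q s⁆ = 1 := by
          rw [← map_commutatorElement]
          exact (hker _).mpr hmem
        exact (commutatorElement_eq_one_iff_commute.mp h1).eq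
      rw [Subgroup.mem_center_iff]
      intro x
      have hx := hcent (Subgroup.mem_top x)
      rw [Subgroup.mem_centralizer_iff] at hx
      exact (hx (q f) (Set.mem_singleton _)).symm
    -- images of `lowerCentralSeries Γ (i+1)` are central in the quotient
    have hcentL : ∀ w ∈ lowerCentralSeries Γ (i+1), q w ∈ Subgroup.center (Γ ⧸ R) := by
      intro w hw
      rw [Subgroup.mem_center_iff]
      intro x
      obtain ⟨g, rfl⟩ := hqsurj x
      have h2 : ⁅w, g⁆ ∈ lowerCentralSeries Γ (i+2) :=
        Subgroup.commutator_mem_commutator hw (mem_top g)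
      have h3 : ⁅q w, q g⁆ = 1 := by
        rw [← map_commutatorElement]
        exact (hker _).mpr (Subgroup.mem_sup_right h2)
      exact (commutatorElement_eq_one_iff_commute.mp h3).symm.eq
    -- hence everything in the sup is central
    have hsup : ∀ w ∈ Subgroup.normalClosure (auxF S i) ⊔ lowerCentralSeries Γ i.succ,
        q w ∈ Subgroup.center (Γ ⧸ R) := by
      have h1 : Subgroup.map q (Subgroup.normalClosure (auxF S i) ⊔ lowerCentralSeries Γ (i+1))
          ≤ Subgroup.center (Γ ⧸ R) := by
        rw [Subgroup.map_sup]
        apply sup_le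
        · rw [Subgroup.map_normalClosure _ _ hqsurj]
          apply Subgroup.normalClosure_le_normal
          rintro _ ⟨f, hf, rfl⟩
          exact hcentf f hf
        · rintro _ ⟨w, hw, rfl⟩
          exact hcentL w hw
      intro w hw
      exact h1 (Subgroup.mem_map_of_mem q hw)
    -- conclude
    show ⁅lowerCentralSeries Γ i, (⊤ : Subgroup Γ)⁆ ≤ R
    rw [Subgroup.commutator_le]
    intro w hw g _
    have hw' : w ∈ Subgroup.normalClosure (auxF S i) ⊔ lowerCentralSeries Γ (i+1) :=
      auxP S hS i hw
    have h1 : q ⁅w, g⁆ = 1 := by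
      rw [map_commutatorElement]
      apply commutatorElement_eq_one_iff_commute.mpr
      have := hsup w hw'
      rw [Subgroup.mem_center_iff] at this
      exact (this (q g)).symm
    exact (hker _).mp h1



variable {Γ : Type*} [Group Γ]


lemma aux_kill {n : ℕ} (ρ : Γ →* Matrix.unitaryGroup (Fin n) ℂ)
    (S : Set Γ) (hS : Subgroup.closure S = ⊤) (c : ℕ) (hc : lowerCentralSeries Γ c = ⊥)
    (e : ℕ) (he : 1 ≤ e) (hfac : Nat.factorial n ∣ e)
    (hsmall : ∀ i, 1 ≤ i → i ≤ c → ∀ g ∈ auxF S i, ∀ a b,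
      Complex.abs ((ρ g : Matrix (Fin n) (Fin n) ℂ) a b
        - (1 : Matrix (Fin n) (Fin n) ℂ) a b) < 2 / (n * (e + 1))) :
    commutator Γ ≤ ρ.ker := by
  have main : ∀ d i, 1 ≤ i → c ≤ i + d → lowerCentralSeries Γ i ≤ ρ.ker := by
    intro d
    induction d with
    | zero =>
      intro i _ hci
      have h1 : lowerCentralSeries Γ i ≤ lowerCentralSeries Γ c :=
        Subgroup.lowerCentralSeries_antitone _ (by omega)
      rw [hc] at h1
      exact le_trans h1 bot_le
    | succ d ih =>
      intro i h1 hci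
      have hnext : lowerCentralSeries Γ (i+1) ≤ ρ.ker := ih (i+1) (by omega) (by omega)
      by_cases hic : i ≤ c
      · -- use the smallness hypothesis
        have hkillF : ∀ f ∈ auxF S i, ρ f = 1 := by
          intro f hf
          have hfL : f ∈ lowerCentralSeries Γ i := auxF_subset S i hf
          have hfcomm : f ∈ commutator Γ := by
            have h2 : lowerCentralSeries Γ i ≤ lowerCentralSeries Γ 1 :=
              Subgroup.lowerCentralSeries_antitone _ h1
            rw [← top_lowerCentralSeries_one]
            exact h2 hfL
          have hcommAll : ∀ g : Γ, ((ρ f : Matrix (Fin n) (Fin n) ℂ))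
              * (ρ g : Matrix (Fin n) (Fin n) ℂ)
              = (ρ g : Matrix (Fin n) (Fin n) ℂ) * (ρ f : Matrix (Fin n) (Fin n) ℂ) := by
            intro g
            have h2 : ⁅f, g⁆ ∈ lowerCentralSeries Γ (i+1) :=
              Subgroup.commutator_mem_commutator hfL (mem_top g)
            have h3 : ρ ⁅f, g⁆ = 1 := hnext h2
            rw [map_commutatorElement] at h3
            have h4 : Commute (ρ f) (ρ g) := commutatorElement_eq_one_iff_commute.mp h3
            have h5 := congrArg (fun u : Matrix.unitaryGroup (Fin n) ℂ
              => (u : Matrix (Fin n) (Fin n) ℂ)) h4.eq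
            simpa using h5
          have hmat : (ρ f : Matrix (Fin n) (Fin n) ℂ) = 1 := by
            apply aux_unitary_eq_one n e he _ (ρ f).2
            · intro lam v hv0 hveq
              have h6 : lam ^ (Nat.factorial n) = 1 :=
                aux_eig_pow ρ f hfcomm hcommAll lam v hv0 hveq
              obtain ⟨k, hk⟩ := hfac
              rw [hk, pow_mul, h6, one_pow]
            · intro a b
              exact hsmall i h1 hic f hf a b
          exact Subtype.ext hmat
        have hP := auxP S hS i
        apply le_trans hP
        apply sup_le _ hnext
        apply Subgroup.normalClosure_le_normal
        intro f hf
        exact hkillF f hf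
      · have h2 : lowerCentralSeries Γ i ≤ lowerCentralSeries Γ c :=
          Subgroup.lowerCentralSeries_antitone _ (by omega)
        rw [hc] at h2
        exact le_trans h2 bot_le
  have := main c 1 le_rfl (by omega)
  rwa [top_lowerCentralSeries_one] at this

end AuxGroup

open Subgroup

section TopologyAux


variable {X Y : Type*} [TopologicalSpace X] [TopologicalSpace Y]

lemma aux_homeo_component (h : X ≃ₜ Y) (x₀ : X) :
    Nonempty (↥(connectedComponent x₀) ≃ₜ ↥(connectedComponent (h x₀))) := by
  have himg : h '' connectedComponent x₀ = connectedComponent (h x₀) := by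
    apply Set.Subset.antisymm
    · exact h.continuous.image_connectedComponent_subset x₀
    · intro y hy
      have h2 := h.symm.continuous.image_connectedComponent_subset (h x₀)
      rw [h.symm_apply_apply] at h2
      have h3 : h.symm y ∈ connectedComponent x₀ := h2 (Set.mem_image_of_mem _ hy)
      exact ⟨h.symm y, h3, h.apply_symm_apply y⟩
  exact ⟨(h.image (connectedComponent x₀)).trans (Homeomorph.setCongr himg)⟩

lemma aux_clopen_component {s : Set Y} (hco : IsClopen s) {y₀ : Y} (hy : y₀ ∈ s) :
    Nonempty (↥(connectedComponent (⟨y₀, hy⟩ : s)) ≃ₜ ↥(connectedComponent y₀)) := by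
  have step1 : connectedComponent y₀ ⊆ s := hco.connectedComponent_subset hy
  have step2 : Subtype.val '' (connectedComponent (⟨y₀, hy⟩ : s)) = connectedComponent y₀ := by
    apply Set.Subset.antisymm
    · have := continuous_subtype_val.image_connectedComponent_subset (⟨y₀, hy⟩ : s)
      exact this
    · set P : Set s := Subtype.val ⁻¹' (connectedComponent y₀) with hP
      have himg : Subtype.val '' P = connectedComponent y₀ := by
        rw [hP, Subtype.image_preimage_coe]
        exact Set.inter_eq_self_of_subset_right step1
      have hpre : IsPreconnected P := by
        rw [← Topology.IsInducing.subtypeVal.isPreconnected_image, himg]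
        exact isPreconnected_connectedComponent
      have hmem : (⟨y₀, hy⟩ : s) ∈ P := mem_connectedComponent
      have := hpre.subset_connectedComponent hmem
      rw [← himg]
      exact Set.image_mono this
  refine ⟨{
    toFun := fun x => ⟨x.1.1, by rw [← step2]; exact Set.mem_image_of_mem _ x.2⟩
    invFun := fun y => ⟨⟨y.1, step1 y.2⟩, by
      have hmem : y.1 ∈ Subtype.val '' (connectedComponent (⟨y₀, hy⟩ : s)) := by
        rw [step2]; exact y.2
      obtain ⟨x, hx, hxy⟩ := hmem
      have : (⟨y.1, step1 y.2⟩ : s) = x := Subtype.ext hxy.symm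
      rw [this]
      exact hx⟩
    left_inv := fun x => by apply Subtype.ext; apply Subtype.ext; rfl
    right_inv := fun y => by apply Subtype.ext; rfl
    continuous_toFun := by
      apply Continuous.subtype_mk
      exact continuous_subtype_val.comp continuous_subtype_val
    continuous_invFun := by
      apply Continuous.subtype_mk
      exact Continuous.subtype_mk continuous_subtype_val _ }⟩

end TopologyAux






set_option maxHeartbeats 2000000 in
/-- Let `Γ` be a finitely generated nilpotent group with abelianization `ℤ^r × A`, `A` finite
abelian, and let `K` be a closed subgroup of `U(n)`. Then the connected component of the
trivial homomorphism in `Hom(Γ,K)` is homeomorphic to the connected component of the trivial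
homomorphism in `Hom(ℤ^r,K)`. -/
theorem component_of_trivial_homeomorphic_abelian
    (n : ℕ) (K : Subgroup (Matrix.unitaryGroup (Fin n) ℂ))
    (hK : IsClosed (K : Set (Matrix.unitaryGroup (Fin n) ℂ)))
    (Γ : Type*) [Group Γ] (hfg : Group.FG Γ) (hnil : Group.IsNilpotent Γ)
    (r : ℕ) (A : Type*) [CommGroup A] [Finite A]
    (hab : Nonempty (Abelianization Γ ≃* Multiplicative (Fin r → ℤ) × A)) :
    Nonempty
      (↥(connectedComponent (1 : Γ →* ↥K)) ≃ₜ
        ↥(connectedComponent (1 : Multiplicative (Fin r → ℤ) →* ↥K))) := by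
  classical
  obtain ⟨eab⟩ := hab
  rcases Nat.eq_zero_or_pos n with hn0 | hn0
  · -- degenerate case `n = 0`
    subst hn0
    haveI hms : Subsingleton (Matrix (Fin 0) (Fin 0) ℂ) :=
      ⟨fun a b => Matrix.ext fun i _ => i.elim0⟩
    haveI : Subsingleton (Matrix.unitaryGroup (Fin 0) ℂ) :=
      ⟨fun a b => Subtype.ext (Subsingleton.elim _ _)⟩
    haveI : Subsingleton ↥K := ⟨fun a b => Subtype.ext (Subsingleton.elim _ _)⟩
    haveI hs1 : Subsingleton (Γ →* ↥K) :=
      ⟨fun f g => MonoidHom.ext fun x => Subsingleton.elim _ _⟩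
    haveI hs2 : Subsingleton (Multiplicative (Fin r → ℤ) →* ↥K) :=
      ⟨fun f g => MonoidHom.ext fun x => Subsingleton.elim _ _⟩
    haveI : Unique ↥(connectedComponent (1 : Γ →* ↥K)) :=
      { default := ⟨1, mem_connectedComponent⟩
        uniq := fun a => Subtype.ext (Subsingleton.elim _ _) }
    haveI : Unique ↥(connectedComponent (1 : Multiplicative (Fin r → ℤ) →* ↥K)) :=
      { default := ⟨1, mem_connectedComponent⟩
        uniq := fun a => Subtype.ext (Subsingleton.elim _ _) }
    exact ⟨Homeomorph.homeomorphOfUnique _ _⟩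
  -- main case
  obtain ⟨c, hc⟩ := _root_.nilpotent_iff_lowerCentralSeries.mp hnil
  obtain ⟨S, hSclosure, hSfinite⟩ := Group.fg_iff.mp hfg
  set Z := Multiplicative (Fin r → ℤ) with hZ
  set π : Γ →* Z := (MonoidHom.fst Z A).comp (eab.toMonoidHom.comp Abelianization.of) with hπdef
  have hπ : ∀ g : Γ, π g = (eab (Abelianization.of g)).1 := fun g => rfl
  have hofsurj : Function.Surjective (Abelianization.of (G := Γ)) := fun y =>
    QuotientGroup.induction_on y fun g => ⟨g, rfl⟩
  have hπsurj : Function.Surjective π := by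
    intro x
    obtain ⟨y, hy⟩ := eab.surjective (x, 1)
    obtain ⟨g, rfl⟩ := hofsurj y
    exact ⟨g, by rw [hπ, hy]⟩
  set N : Subgroup Γ := π.ker with hNdef
  have hcommN : commutator Γ ≤ N := Abelianization.commutator_subset_ker π
  have hofker : ∀ g : Γ, Abelianization.of g = 1 ↔ g ∈ commutator Γ := fun g =>
    QuotientGroup.eq_one_iff g
  set m := Nat.card A with hmdef
  have hm1 : 1 ≤ m := Nat.card_pos
  have ht' : ∀ a : A, ∃ g : Γ, eab (Abelianization.of g) = (1, a) := by
    intro a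
    obtain ⟨y, hy⟩ := eab.surjective (1, a)
    obtain ⟨g, rfl⟩ := hofsurj y
    exact ⟨g, hy⟩
  choose t ht using ht'
  have htN : ∀ a, t a ∈ N := by
    intro a
    have : π (t a) = 1 := by rw [hπ, ht a]
    exact MonoidHom.mem_ker.mpr this
  have htm : ∀ a : A, (t a) ^ m ∈ commutator Γ := by
    intro a
    rw [← hofker]
    apply eab.injective
    rw [map_pow, map_pow, ht a, map_one]
    rw [Prod.pow_mk, pow_card_eq_one', one_pow]
    rfl
  have hdecomp : ∀ g ∈ N, g * (t ((eab (Abelianization.of g)).2))⁻¹ ∈ commutator Γ := by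
    intro g hg
    rw [← hofker]
    apply eab.injective
    rw [map_mul, map_mul, map_inv, map_inv, ht, map_one]
    have h1 : eab (Abelianization.of g) = ((1 : Z), (eab (Abelianization.of g)).2) := by
      apply Prod.ext
      · rw [← hπ g]; exact MonoidHom.mem_ker.mp hg
      · rfl
    rw [← h1, mul_inv_cancel]
  -- constants
  set e := Nat.factorial n * m with hedef
  have he1 : 1 ≤ e := Nat.one_le_iff_ne_zero.mpr
    (Nat.mul_ne_zero (Nat.factorial_ne_zero n) (by omega))
  have hfac : Nat.factorial n ∣ e := ⟨m, rfl⟩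
  set δ : ℝ := 2 / ((n : ℝ) * ((e : ℝ) + 1)) with hδdef
  have hδpos : 0 < δ := by
    have h1 : (0:ℝ) < (n:ℝ) := by exact_mod_cast hn0
    have h2 : (0:ℝ) < (e:ℝ) + 1 := by positivity
    rw [hδdef]
    positivity
  set Fbig : Set Γ := (⋃ i ∈ Finset.Icc 1 c, auxF S i) ∪ Set.range t with hFbigdef
  have hFbigfin : Fbig.Finite := by
    apply Set.Finite.union
    · exact Set.Finite.biUnion (Finset.Icc 1 c).finite_toSet
        (fun i _ => auxF_finite hSfinite i)
    · exact Set.finite_range t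
  set SS : Set (Γ →* ↥K) := {ρ | ∀ g ∈ N, ρ g = 1} with hSSdef
  set UU : Set (Γ →* ↥K) := {ρ | ∀ g ∈ Fbig, ∀ a b : Fin n,
    Complex.abs ((((ρ g : Matrix.unitaryGroup (Fin n) ℂ)) : Matrix (Fin n) (Fin n) ℂ) a b
      - (1 : Matrix (Fin n) (Fin n) ℂ) a b) < δ} with hUUdef
  have hFbigN : Fbig ⊆ (N : Set Γ) := by
    intro g hg
    rcases hg with hg | hg
    · obtain ⟨i, hi, hgi⟩ := Set.mem_iUnion₂.mp hg
      have h1 : g ∈ lowerCentralSeries Γ i := auxF_subset S i hgi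
      have h2 : lowerCentralSeries Γ i ≤ lowerCentralSeries Γ 1 :=
        Subgroup.lowerCentralSeries_antitone _ (Finset.mem_Icc.mp hi).1
      rw [top_lowerCentralSeries_one] at h2
      exact hcommN (h2 h1)
    · obtain ⟨a, rfl⟩ := hg
      exact htN a
  have hSUeq : SS = UU := by
    apply Set.Subset.antisymm
    · intro ρ hρ g hg a b
      have h1 : ρ g = 1 := hρ g (hFbigN hg)
      rw [h1]
      simpa using hδpos
    · intro ρ hρ
      set ρ' : Γ →* Matrix.unitaryGroup (Fin n) ℂ := K.subtype.comp ρ with hρ'def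
      have hker1 : commutator Γ ≤ ρ'.ker := by
        apply aux_kill ρ' S hSclosure c hc e he1 hfac
        intro i h1 hic g hgF a b
        have hmem : g ∈ Fbig :=
          Or.inl (Set.mem_iUnion₂.mpr ⟨i, Finset.mem_Icc.mpr ⟨h1, hic⟩, hgF⟩)
        exact hρ g hmem a b
      have htors : ∀ a : A, ρ' (t a) = 1 := by
        intro a
        apply Subtype.ext
        apply aux_unitary_eq_one n e he1 _ (ρ' (t a)).2
        · intro lam v hv0 hveq
          have hzm : (ρ' (t a)) ^ m = 1 := by
            rw [← map_pow]
            exact hker1 (htm a)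
          have hmat : ((ρ' (t a) : Matrix (Fin n) (Fin n) ℂ)) ^ m = 1 := by
            have h2 := congrArg
              (fun u : Matrix.unitaryGroup (Fin n) ℂ => (u : Matrix (Fin n) (Fin n) ℂ)) hzm
            simpa using h2
          have hiter : ∀ k : ℕ,
              (((ρ' (t a) : Matrix (Fin n) (Fin n) ℂ)) ^ k).mulVec v = lam ^ k • v := by
            intro k
            induction k with
            | zero => simp [Matrix.one_mulVec]
            | succ k ih =>
              rw [pow_succ', pow_succ', ← Matrix.mulVec_mulVec, ih, Matrix.mulVec_smul, hveq,
                smul_smul, mul_comm]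
          have h2 := hiter m
          rw [hmat, Matrix.one_mulVec] at h2
          have h3 : (lam ^ m - 1) • v = 0 := by
            rw [sub_smul, one_smul, ← h2, sub_self]
          have h4 : lam ^ m = 1 := by
            rcases smul_eq_zero.mp h3 with h | h
            · exact sub_eq_zero.mp h
            · exact absurd h hv0
          calc lam ^ e = (lam ^ m) ^ (Nat.factorial n) := by rw [hedef, mul_comm, pow_mul]
            _ = 1 := by rw [h4, one_pow]
        · intro a' b'
          exact hρ (t a) (Or.inr (Set.mem_range_self a)) a' b'
      intro g hg
      have h5 := hdecomp g hg
      have h6 : ρ' (g * (t ((eab (Abelianization.of g)).2))⁻¹) = 1 := hker1 h5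
      rw [map_mul, map_inv, htors, inv_one, mul_one] at h6
      exact Subtype.ext h6
  have h1SS : (1 : Γ →* ↥K) ∈ SS := fun g _ => rfl
  have hopen : IsOpen SS := by
    rw [hSUeq]
    have hUU2 : UU = ⋂ g ∈ Fbig, ⋂ (a : Fin n), ⋂ (b : Fin n),
        {ρ : Γ →* ↥K | Complex.abs
          ((((ρ g : Matrix.unitaryGroup (Fin n) ℂ)) : Matrix (Fin n) (Fin n) ℂ) a b
            - (1 : Matrix (Fin n) (Fin n) ℂ) a b) < δ} := by
      ext ρ
      simp only [hUUdef, Set.mem_setOf_eq, Set.mem_iInter]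
    rw [hUU2]
    apply hFbigfin.isOpen_biInter
    intro g _
    apply isOpen_iInter_of_finite
    intro a
    apply isOpen_iInter_of_finite
    intro b
    have hcont : Continuous (fun ρ : Γ →* ↥K =>
        Complex.abs ((((ρ g : Matrix.unitaryGroup (Fin n) ℂ)) : Matrix (Fin n) (Fin n) ℂ) a b
          - (1 : Matrix (Fin n) (Fin n) ℂ) a b)) := by
      apply (show Continuous Complex.abs from continuous_norm).comp
      apply Continuous.sub _ continuous_const
      have hg : Continuous (fun ρ : Γ →* ↥K => ρ g) := (continuous_apply g).comp
        (continuous_induced_dom : Continuous (fun ρ : Γ →* ↥K => (ρ : Γ → ↥K)))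
      have A1 : Continuous (fun ρ : Γ →* ↥K =>
          ((ρ g : Matrix.unitaryGroup (Fin n) ℂ) : Matrix (Fin n) (Fin n) ℂ)) :=
        continuous_subtype_val.comp (continuous_subtype_val.comp hg)
      exact (continuous_apply b).comp ((continuous_apply a).comp A1)
    exact IsOpen.preimage hcont isOpen_Iio
  have hclosed : IsClosed SS := by
    have hSS2 : SS = ⋂ g ∈ (N : Set Γ), {ρ : Γ →* ↥K | ρ g = 1} := by
      ext ρ
      simp only [hSSdef, Set.mem_setOf_eq, Set.mem_iInter, SetLike.mem_coe]
    rw [hSS2]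
    apply isClosed_biInter
    intro g _
    have hcont : Continuous (fun ρ : Γ →* ↥K => ρ g) :=
      (continuous_apply g).comp continuous_induced_dom
    exact IsClosed.preimage hcont isClosed_singleton
  have hclopen : IsClopen SS := ⟨hclosed, hopen⟩
  -- the homeomorphism with `Hom(Z, K)`
  set sec : Z → Γ := Function.surjInv hπsurj with hsecdef
  have hsec : ∀ x, π (sec x) = x := fun x => Function.surjInv_eq hπsurj x
  have hcompSS : ∀ σ : Z →* ↥K, σ.comp π ∈ SS := by
    intro σ g hg
    show σ (π g) = 1
    rw [MonoidHom.mem_ker.mp hg, map_one]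
  let hinv : ↥SS → (Z →* ↥K) := fun ρs =>
    { toFun := fun x => (ρs : Γ →* ↥K) (sec x)
      map_one' := by
        apply ρs.2
        exact MonoidHom.mem_ker.mpr (by rw [hsec])
      map_mul' := by
        intro x y
        have hd : (sec x * sec y)⁻¹ * sec (x * y) ∈ N := by
          apply MonoidHom.mem_ker.mpr
          rw [map_mul, map_inv, map_mul, hsec, hsec, hsec]
          group
        have h8 : (ρs : Γ →* ↥K) ((sec x * sec y)⁻¹ * sec (x * y)) = 1 := ρs.2 _ hd
        calc (ρs : Γ →* ↥K) (sec (x * y))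
            = (ρs : Γ →* ↥K) ((sec x * sec y) * ((sec x * sec y)⁻¹ * sec (x * y))) := by
              rw [mul_inv_cancel_left]
          _ = (ρs : Γ →* ↥K) (sec x) * (ρs : Γ →* ↥K) (sec y) := by
              rw [map_mul, h8, mul_one, map_mul] }
  let heq : (Multiplicative (Fin r → ℤ) →* ↥K) ≃ₜ ↥SS :=
    { toFun := fun σ => ⟨σ.comp π, hcompSS σ⟩
      invFun := hinv
      left_inv := by
        intro σ
        apply MonoidHom.ext
        intro x
        show σ (π (sec x)) = σ x
        rw [hsec]
      right_inv := by
        intro ρs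
        apply Subtype.ext
        apply MonoidHom.ext
        intro γ
        show (ρs : Γ →* ↥K) (sec (π γ)) = (ρs : Γ →* ↥K) γ
        have hd : γ⁻¹ * sec (π γ) ∈ N := by
          apply MonoidHom.mem_ker.mpr
          rw [map_mul, map_inv, hsec]
          exact inv_mul_cancel (π γ)
        have h8 := ρs.2 _ hd
        calc (ρs : Γ →* ↥K) (sec (π γ))
            = (ρs : Γ →* ↥K) (γ * (γ⁻¹ * sec (π γ))) := by rw [mul_inv_cancel_left]
          _ = (ρs : Γ →* ↥K) γ := by rw [map_mul, h8, mul_one]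
      continuous_toFun := by
        apply Continuous.subtype_mk
        apply continuous_induced_rng.mpr
        apply continuous_pi
        intro γ
        exact (continuous_apply (π γ)).comp continuous_induced_dom
      continuous_invFun := by
        apply continuous_induced_rng.mpr
        apply continuous_pi
        intro x
        show Continuous fun ρs : ↥SS => (ρs : Γ →* ↥K) (sec x)
        exact (continuous_apply (sec x)).comp
          (continuous_induced_dom.comp continuous_subtype_val) }
  have heq1 : heq 1 = ⟨1, h1SS⟩ := by
    apply Subtype.ext
    apply MonoidHom.ext
    intro γ
    rfl
  obtain ⟨e1⟩ := aux_clopen_component hclopen h1SS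
  obtain ⟨e2⟩ := aux_homeo_component heq.symm (⟨1, h1SS⟩ : ↥SS)
  have hsymm1 : heq.symm ⟨1, h1SS⟩ = 1 := by rw [← heq1, Homeomorph.symm_apply_apply]
  rw [hsymm1] at e2
  exact ⟨e1.symm.trans e2⟩
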